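/- Let H, M be symmetric PSD matrices with μM ⪯ H for μ > 0 sharing a kernel, and g ∈ Im(M) with ‖H†g‖_M > r. Let λ* > 0 satisfy ‖(H + λ*M)†g‖_M = r. Then for any λ > 0 with |λ − λ*| ≤ Δμ²/‖g‖_{M†}, we have ‖(H + λM)†g − (H + λ*M)†g‖_M ≤ Δ. -/

import Mathlib

open Matrix

/-- The four Moore–Penrose conditions characterizing the pseudoinverse. -/
def IsMoorePenrose {d : ℕ} (A B : Matrix (Fin d) (Fin d) ℝ) : Prop :=
  A * B * A = A ∧ B * A * B = B ∧ (A * B)ᵀ = A * B ∧ (B * A)ᵀ = B * A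

section Aux

variable {d : ℕ}

lemma mulVec_dot (A : Matrix (Fin d) (Fin d) ℝ) (u w : Fin d → ℝ) :
    (A *ᵥ u) ⬝ᵥ w = u ⬝ᵥ (Aᵀ *ᵥ w) := by
  rw [dotProduct_mulVec, vecMul_transpose, dotProduct_comm]

lemma mp_unique {A B C : Matrix (Fin d) (Fin d) ℝ}
    (hB : IsMoorePenrose A B) (hC : IsMoorePenrose A C) : B = C := by
  obtain ⟨hB1, hB2, hB3, hB4⟩ := hB
  obtain ⟨hC1, hC2, hC3, hC4⟩ := hC
  have hAB : A * B = A * C := by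
    calc A * B = (A * C * A) * B := by rw [hC1]
    _ = (A * C) * (A * B) := by rw [mul_assoc]
    _ = (A * C)ᵀ * (A * B)ᵀ := by rw [hC3, hB3]
    _ = Cᵀ * (A * B * A)ᵀ := by simp only [transpose_mul, mul_assoc]
    _ = Cᵀ * Aᵀ := by rw [hB1]
    _ = (A * C)ᵀ := (transpose_mul A C).symm
    _ = A * C := hC3
  have hBA : B * A = C * A := by
    calc B * A = B * (A * C * A) := by rw [hC1]
    _ = (B * A) * (C * A) := by simp only [mul_assoc]
    _ = (B * A)ᵀ * (C * A)ᵀ := by rw [hB4, hC4]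
    _ = (A * B * A)ᵀ * Cᵀ := by simp only [transpose_mul, mul_assoc]
    _ = Aᵀ * Cᵀ := by rw [hB1]
    _ = (C * A)ᵀ := (transpose_mul C A).symm
    _ = C * A := hC4
  calc B = B * A * B := hB2.symm
  _ = B * (A * C) := by rw [← hAB, mul_assoc]
  _ = (B * A) * C := by rw [mul_assoc]
  _ = (C * A) * C := by rw [hBA]
  _ = C := hC2

lemma mp_symm {A B : Matrix (Fin d) (Fin d) ℝ} (hA : Aᵀ = A)
    (hB : IsMoorePenrose A B) : Bᵀ = B := by
  obtain ⟨hB1, hB2, hB3, hB4⟩ := hB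
  have hBt : IsMoorePenrose A Bᵀ := by
    refine ⟨?_, ?_, ?_, ?_⟩
    · have h := congrArg transpose hB1
      simp only [transpose_mul, hA, mul_assoc] at h
      rw [← mul_assoc] at h
      exact h
    · have h := congrArg transpose hB2
      simp only [transpose_mul, hA, mul_assoc] at h
      rw [← mul_assoc] at h
      exact h
    · calc (A * Bᵀ)ᵀ = B * Aᵀ := by rw [transpose_mul, transpose_transpose]
      _ = B * A := by rw [hA]
      _ = (B * A)ᵀ := hB4.symm
      _ = Aᵀ * Bᵀ := transpose_mul B A
      _ = A * Bᵀ := by rw [hA]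
    · calc (Bᵀ * A)ᵀ = Aᵀ * B := by rw [transpose_mul, transpose_transpose]
      _ = A * B := by rw [hA]
      _ = (A * B)ᵀ := hB3.symm
      _ = Bᵀ * Aᵀ := transpose_mul A B
      _ = Bᵀ * A := by rw [hA]
  exact mp_unique hBt ⟨hB1, hB2, hB3, hB4⟩

/-- If `A` is symmetric and `g` is orthogonal to the kernel of `A`, then
`B *ᵥ g` solves `A *ᵥ x = g`, where `B` is a Moore–Penrose inverse. -/
lemma mp_solve {A B : Matrix (Fin d) (Fin d) ℝ} (hA : Aᵀ = A)
    (hB : IsMoorePenrose A B) (g : Fin d → ℝ)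
    (hgker : ∀ z, A *ᵥ z = 0 → g ⬝ᵥ z = 0) :
    A *ᵥ (B *ᵥ g) = g := by
  have hBsym : Bᵀ = B := mp_symm hA hB
  have hcomm : A * B = B * A := by
    calc A * B = (A * B)ᵀ := hB.2.2.1.symm
    _ = Bᵀ * Aᵀ := transpose_mul A B
    _ = B * A := by rw [hA, hBsym]
  set w : Fin d → ℝ := g - A *ᵥ (B *ᵥ g) with hw
  have hAAB : A * A * B = A := by
    calc A * A * B = A * (A * B) := by rw [mul_assoc]
    _ = A * (B * A) := by rw [hcomm]
    _ = A * B * A := by rw [mul_assoc]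
    _ = A := hB.1
  have hAABg : A *ᵥ (A *ᵥ (B *ᵥ g)) = A *ᵥ g := by
    rw [mulVec_mulVec, mulVec_mulVec, hAAB]
  have hAw : A *ᵥ w = 0 := by
    rw [hw, mulVec_sub, hAABg, sub_self]
  have h1 : g ⬝ᵥ w = 0 := hgker w hAw
  have h2 : (A *ᵥ (B *ᵥ g)) ⬝ᵥ w = 0 := by
    rw [mulVec_dot, hA, hAw, dotProduct_zero]
  have h3 : w ⬝ᵥ w = 0 := by
    have hww : w ⬝ᵥ w = g ⬝ᵥ w - (A *ᵥ (B *ᵥ g)) ⬝ᵥ w := by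
      rw [hw, sub_dotProduct]
    rw [hww, h1, h2, sub_zero]
  have h4 : w = 0 := by
    funext i
    have h3' : ∑ j, w j * w j = 0 := h3
    have := (Finset.sum_eq_zero_iff_of_nonneg
      (fun j _ => mul_self_nonneg (w j))).mp h3' i (Finset.mem_univ i)
    exact mul_self_eq_zero.mp this
  rw [hw] at h4
  exact (sub_eq_zero.mp h4).symm

/-- Cauchy–Schwarz for the bilinear form of a PSD matrix. -/
lemma psd_cs {N : Matrix (Fin d) (Fin d) ℝ} (hN : N.PosSemidef) (x y : Fin d → ℝ) :
    (x ⬝ᵥ N *ᵥ y) ^ 2 ≤ (x ⬝ᵥ N *ᵥ x) * (y ⬝ᵥ N *ᵥ y) := by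
  obtain ⟨B, rfl⟩ : ∃ B : Matrix (Fin d) (Fin d) ℝ, N = Bᴴ * B := by
    open scoped MatrixOrder in
    exact CStarAlgebra.nonneg_iff_eq_star_mul_self.mp hN.nonneg
  have key : ∀ u v : Fin d → ℝ, u ⬝ᵥ (Bᴴ * B) *ᵥ v = (B *ᵥ u) ⬝ᵥ (B *ᵥ v) := by
    intro u v
    have hBH : (Bᴴ : Matrix (Fin d) (Fin d) ℝ) = Bᵀ := by
      ext i j; simp [conjTranspose_apply]
    rw [hBH, ← mulVec_mulVec, ← mulVec_dot]
  rw [key, key, key]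
  simpa [dotProduct, pow_two] using
    Finset.sum_mul_sq_le_sq_mul_sq Finset.univ (fun i => (B *ᵥ x) i) (fun i => (B *ᵥ y) i)

end Aux

set_option maxHeartbeats 1000000 in
/-- Lipschitz-type stability of the trust-region solution in `λ`. -/
theorem stmt11 {d : ℕ} (H M Mdag Hdag : Matrix (Fin d) (Fin d) ℝ)
    (hH : H.PosSemidef) (hM : M.PosSemidef)
    (hker : ∀ x, M.mulVec x = 0 ↔ H.mulVec x = 0)
    (hMdag : IsMoorePenrose M Mdag) (hHdag : IsMoorePenrose H Hdag)
    (μ : ℝ) (hμ : 0 < μ) (hdom : (H - μ • M).PosSemidef)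
    (g : Fin d → ℝ) (hg : g ∈ Set.range M.mulVec)
    (r Δ : ℝ) (hΔ : 0 < Δ)
    (hfar : r < Real.sqrt (Hdag.mulVec g ⬝ᵥ M.mulVec (Hdag.mulVec g)))
    (lamstar : ℝ) (hlamstar : 0 < lamstar)
    (Pstar : Matrix (Fin d) (Fin d) ℝ) (hPstar : IsMoorePenrose (H + lamstar • M) Pstar)
    (hbd : Real.sqrt (Pstar.mulVec g ⬝ᵥ M.mulVec (Pstar.mulVec g)) = r)
    (lam : ℝ) (hlam : 0 < lam)
    (P : Matrix (Fin d) (Fin d) ℝ) (hP : IsMoorePenrose (H + lam • M) P)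
    (hclose : |lam - lamstar| ≤ Δ * μ ^ 2 / Real.sqrt (g ⬝ᵥ Mdag.mulVec g)) :
    Real.sqrt ((P.mulVec g - Pstar.mulVec g) ⬝ᵥ M.mulVec (P.mulVec g - Pstar.mulVec g))
      ≤ Δ := by
  -- basic symmetry facts
  have hMsym : Mᵀ = M := hM.1
  have hHsym : Hᵀ = H := hH.1
  -- g is orthogonal to ker M
  obtain ⟨u, hu⟩ := hg
  have hgM : ∀ z, M *ᵥ z = 0 → g ⬝ᵥ z = 0 := by
    intro z hz
    rw [← hu, mulVec_dot, hMsym, hz, dotProduct_zero]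
  -- quadratic form facts
  have hMq : ∀ x, 0 ≤ x ⬝ᵥ M *ᵥ x := fun x => hM.dotProduct_mulVec_nonneg x
  have hHq : ∀ x, 0 ≤ x ⬝ᵥ H *ᵥ x := fun x => hH.dotProduct_mulVec_nonneg x
  have hdomq : ∀ x, μ * (x ⬝ᵥ M *ᵥ x) ≤ x ⬝ᵥ H *ᵥ x := by
    intro x
    have h0 := hdom.dotProduct_mulVec_nonneg x
    have hexp : x ⬝ᵥ (H - μ • M) *ᵥ x = x ⬝ᵥ H *ᵥ x - μ * (x ⬝ᵥ M *ᵥ x) := by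
      rw [sub_mulVec, dotProduct_sub, smul_mulVec, dotProduct_smul, smul_eq_mul]
    rw [show star x = x from rfl, hexp] at h0
    linarith
  -- solving with pseudoinverses
  have solveAux : ∀ (lm : ℝ), 0 < lm → ∀ (Q : Matrix (Fin d) (Fin d) ℝ),
      IsMoorePenrose (H + lm • M) Q → (H + lm • M) *ᵥ (Q *ᵥ g) = g := by
    intro lm hlm Q hQ
    have hAsym : (H + lm • M)ᵀ = H + lm • M := by
      rw [transpose_add, hHsym, transpose_smul, hMsym]
    refine mp_solve hAsym hQ g ?_
    intro z hz
    have hq : z ⬝ᵥ (H + lm • M) *ᵥ z = 0 := by rw [hz, dotProduct_zero]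
    have hexp : z ⬝ᵥ (H + lm • M) *ᵥ z = z ⬝ᵥ H *ᵥ z + lm * (z ⬝ᵥ M *ᵥ z) := by
      rw [add_mulVec, dotProduct_add, smul_mulVec, dotProduct_smul, smul_eq_mul]
    rw [hexp] at hq
    have hMz0 : z ⬝ᵥ M *ᵥ z = 0 := by
      have h5 : lm * (z ⬝ᵥ M *ᵥ z) = 0 :=
        le_antisymm (by linarith [hHq z]) (mul_nonneg hlm.le (hMq z))
      exact (mul_eq_zero.mp h5).resolve_left (ne_of_gt hlm)
    have hMz : M *ᵥ z = 0 := by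
      apply (hM.dotProduct_mulVec_zero_iff z).mp
      simpa using hMz0
    exact hgM z hMz
  set x : Fin d → ℝ := P *ᵥ g with hx
  set xs : Fin d → ℝ := Pstar *ᵥ g with hxs
  set w : Fin d → ℝ := x - xs with hwdef
  have hsolx : (H + lam • M) *ᵥ x = g := solveAux lam hlam P hP
  have hsolxs : (H + lamstar • M) *ᵥ xs = g := solveAux lamstar hlamstar Pstar hPstar
  set y : Fin d → ℝ := Hdag *ᵥ g with hy
  have hsoly : H *ᵥ y = g := by
    refine mp_solve hHsym hHdag g ?_
    intro z hz
    exact hgM z ((hker z).mpr hz)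
  set z : Fin d → ℝ := Mdag *ᵥ g with hz
  have hsolz : M *ᵥ z = g := mp_solve hMsym hMdag g hgM
  have hr0 : 0 ≤ r := hbd ▸ Real.sqrt_nonneg _
  -- step 1 : μ * (y ⬝ᵥ M y) ≤ g ⬝ᵥ y
  have hyHy : y ⬝ᵥ H *ᵥ y = g ⬝ᵥ y := by
    rw [hsoly, dotProduct_comm]
  have hstep1 : μ * (y ⬝ᵥ M *ᵥ y) ≤ g ⬝ᵥ y := hyHy ▸ hdomq y
  have hyMy_pos : 0 < y ⬝ᵥ M *ᵥ y := by
    by_contra hcon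
    push_neg at hcon
    have hzero : Real.sqrt (y ⬝ᵥ M *ᵥ y) = 0 := Real.sqrt_eq_zero_of_nonpos hcon
    rw [hzero] at hfar
    linarith
  have hgy_pos : 0 < g ⬝ᵥ y := lt_of_lt_of_le (mul_pos hμ hyMy_pos) hstep1
  -- step 2 : μ * (g ⬝ᵥ y) ≤ g ⬝ᵥ z
  have hzMz : z ⬝ᵥ M *ᵥ z = g ⬝ᵥ z := by
    rw [hsolz, dotProduct_comm]
  have hgz_nonneg : 0 ≤ g ⬝ᵥ z := hzMz ▸ hMq z
  have hgy_eq : g ⬝ᵥ y = z ⬝ᵥ M *ᵥ y := by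
    rw [← hsolz, mulVec_dot, hMsym]
  have hcs1 : (z ⬝ᵥ M *ᵥ y) ^ 2 ≤ (z ⬝ᵥ M *ᵥ z) * (y ⬝ᵥ M *ᵥ y) := psd_cs hM z y
  have hstep2 : μ * (g ⬝ᵥ y) ≤ g ⬝ᵥ z := by
    have h1 : (g ⬝ᵥ y) ^ 2 ≤ (g ⬝ᵥ z) * (y ⬝ᵥ M *ᵥ y) := by
      rw [hgy_eq, ← hzMz]; exact hcs1
    have ha : μ * (g ⬝ᵥ y) ^ 2 ≤ μ * ((g ⬝ᵥ z) * (y ⬝ᵥ M *ᵥ y)) :=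
      mul_le_mul_of_nonneg_left h1 hμ.le
    have hb : (g ⬝ᵥ z) * (μ * (y ⬝ᵥ M *ᵥ y)) ≤ (g ⬝ᵥ z) * (g ⬝ᵥ y) :=
      mul_le_mul_of_nonneg_left hstep1 hgz_nonneg
    have hc : (μ * (g ⬝ᵥ y)) * (g ⬝ᵥ y) ≤ (g ⬝ᵥ z) * (g ⬝ᵥ y) := by
      calc (μ * (g ⬝ᵥ y)) * (g ⬝ᵥ y) = μ * (g ⬝ᵥ y) ^ 2 := by ring
      _ ≤ μ * ((g ⬝ᵥ z) * (y ⬝ᵥ M *ᵥ y)) := ha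
      _ = (g ⬝ᵥ z) * (μ * (y ⬝ᵥ M *ᵥ y)) := by ring
      _ ≤ (g ⬝ᵥ z) * (g ⬝ᵥ y) := hb
    exact le_of_mul_le_mul_right hc hgy_pos
  -- hence μ² r² < g ⬝ᵥ z
  have hr2 : r ^ 2 < y ⬝ᵥ M *ᵥ y := (Real.lt_sqrt hr0).mp hfar
  have hrs : μ ^ 2 * r ^ 2 < g ⬝ᵥ z := by
    have h1 : μ * μ * r ^ 2 < μ * μ * (y ⬝ᵥ M *ᵥ y) :=
      mul_lt_mul_of_pos_left hr2 (mul_pos hμ hμ)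
    have h2 : μ * (μ * (y ⬝ᵥ M *ᵥ y)) ≤ μ * (g ⬝ᵥ y) :=
      mul_le_mul_of_nonneg_left hstep1 hμ.le
    linarith [hstep2]
  have hgz_pos : 0 < g ⬝ᵥ z := lt_of_le_of_lt (by positivity) hrs
  set s : ℝ := Real.sqrt (g ⬝ᵥ z) with hs
  have hs_pos : 0 < s := Real.sqrt_pos.mpr hgz_pos
  have hs_sq : s ^ 2 = g ⬝ᵥ z := Real.sq_sqrt hgz_pos.le
  have hmrs : μ * r < s := by
    have h1 : (μ * r) ^ 2 < s ^ 2 := by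
      rw [hs_sq]
      calc (μ * r) ^ 2 = μ ^ 2 * r ^ 2 := by ring
      _ < g ⬝ᵥ z := hrs
    exact lt_of_pow_lt_pow_left₀ 2 hs_pos.le h1
  -- main estimate
  have hAw : (H + lam • M) *ᵥ w = (lamstar - lam) • (M *ᵥ xs) := by
    have h1 : (H + lam • M) *ᵥ xs =
        (H + lamstar • M) *ᵥ xs + (lam - lamstar) • (M *ᵥ xs) := by
      rw [add_mulVec, add_mulVec, smul_mulVec, smul_mulVec]
      module
    rw [hwdef, mulVec_sub, hsolx, h1, hsolxs]
    module
  set q : ℝ := w ⬝ᵥ M *ᵥ w with hq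
  have hq_nonneg : 0 ≤ q := by rw [hq]; exact hMq w
  have hwAw : w ⬝ᵥ (H + lam • M) *ᵥ w = (lamstar - lam) * (w ⬝ᵥ M *ᵥ xs) := by
    rw [hAw, dotProduct_smul, smul_eq_mul]
  have hlower : μ * q ≤ w ⬝ᵥ (H + lam • M) *ᵥ w := by
    have hexp : w ⬝ᵥ (H + lam • M) *ᵥ w = w ⬝ᵥ H *ᵥ w + lam * q := by
      rw [add_mulVec, dotProduct_add, smul_mulVec, dotProduct_smul, smul_eq_mul, hq]
    rw [hexp]
    have hd := hdomq w
    rw [← hq] at hd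
    have hl : 0 ≤ lam * q := mul_nonneg hlam.le hq_nonneg
    linarith
  have hxsMxs : xs ⬝ᵥ M *ᵥ xs = r ^ 2 := by
    have h0 : 0 ≤ xs ⬝ᵥ M *ᵥ xs := hMq xs
    have hsq := Real.sq_sqrt h0
    rw [hbd] at hsq
    linarith
  have hcs2 : (w ⬝ᵥ M *ᵥ xs) ^ 2 ≤ q * r ^ 2 := by
    have h := psd_cs hM w xs
    rw [hxsMxs] at h
    exact h
  have h1 : μ * q ≤ (lamstar - lam) * (w ⬝ᵥ M *ᵥ xs) := hwAw ▸ hlower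
  have hmain : μ ^ 2 * q ^ 2 ≤ (lam - lamstar) ^ 2 * (q * r ^ 2) := by
    have h2 := pow_le_pow_left₀ (mul_nonneg hμ.le hq_nonneg) h1 2
    calc μ ^ 2 * q ^ 2 = (μ * q) ^ 2 := by ring
    _ ≤ ((lamstar - lam) * (w ⬝ᵥ M *ᵥ xs)) ^ 2 := h2
    _ = (lamstar - lam) ^ 2 * (w ⬝ᵥ M *ᵥ xs) ^ 2 := by ring
    _ ≤ (lamstar - lam) ^ 2 * (q * r ^ 2) :=
        mul_le_mul_of_nonneg_left hcs2 (sq_nonneg _)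
    _ = (lam - lamstar) ^ 2 * (q * r ^ 2) := by ring
  have hqΔ : q ≤ Δ ^ 2 := by
    rcases eq_or_lt_of_le hq_nonneg with h | hq_pos
    · rw [← h]; positivity
    · have hq2 : μ ^ 2 * q ≤ (lam - lamstar) ^ 2 * r ^ 2 := by
        nlinarith [hmain, hq_pos]
      have hcl2 : (lam - lamstar) ^ 2 ≤ (Δ * μ ^ 2 / s) ^ 2 := by
        have h2 := pow_le_pow_left₀ (abs_nonneg (lam - lamstar)) hclose 2
        rwa [sq_abs] at h2
      have hq3 : μ ^ 2 * q ≤ (Δ * μ ^ 2 / s) ^ 2 * r ^ 2 := by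
        calc μ ^ 2 * q ≤ (lam - lamstar) ^ 2 * r ^ 2 := hq2
        _ ≤ (Δ * μ ^ 2 / s) ^ 2 * r ^ 2 :=
            mul_le_mul_of_nonneg_right hcl2 (sq_nonneg r)
      have hexpand : (Δ * μ ^ 2 / s) ^ 2 * r ^ 2 = Δ ^ 2 * μ ^ 2 * ((μ * r) ^ 2 / s ^ 2) := by
        field_simp
      have hineq : (μ * r) ^ 2 / s ^ 2 ≤ 1 := by
        rw [div_le_one (by positivity)]
        exact pow_le_pow_left₀ (mul_nonneg hμ.le hr0) hmrs.le 2
      have hfin : μ ^ 2 * q ≤ Δ ^ 2 * μ ^ 2 := by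
        rw [hexpand] at hq3
        calc μ ^ 2 * q ≤ Δ ^ 2 * μ ^ 2 * ((μ * r) ^ 2 / s ^ 2) := hq3
        _ ≤ Δ ^ 2 * μ ^ 2 * 1 := mul_le_mul_of_nonneg_left hineq (by positivity)
        _ = Δ ^ 2 * μ ^ 2 := by ring
      have hfin2 : μ ^ 2 * q ≤ μ ^ 2 * Δ ^ 2 := by linarith
      exact le_of_mul_le_mul_left hfin2 (by positivity)
  show Real.sqrt q ≤ Δ
  calc Real.sqrt q ≤ Real.sqrt (Δ ^ 2) := Real.sqrt_le_sqrt hqΔ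
  _ = Δ := Real.sqrt_sq hΔ.le
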